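/- Let G be a graph with spectral radius μ and a positive unit eigenvector x to μ. If uv is an edge of G with d(u) = d(v) = 2 and μ² ≥ 14, then x_u·x_v < 1/(4μ). -/
import Mathlib

open Matrix Finset

def IsSpecRad {n : ℕ} (A : Matrix (Fin n) (Fin n) ℝ) (μ : ℝ) : Prop :=
  Module.End.HasEigenvalue A.mulVecLin μ ∧
    ∀ ν : ℝ, Module.End.HasEigenvalue A.mulVecLin ν → ν ≤ μ

set_option maxHeartbeats 1600000 in
theorem claim1 (n : ℕ) (G : SimpleGraph (Fin n)) [DecidableRel G.Adj] (μ : ℝ)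
    (hμ : IsSpecRad (G.adjMatrix ℝ) μ)
    (x : Fin n → ℝ) (hpos : ∀ i, 0 < x i)
    (hx : (G.adjMatrix ℝ).mulVec x = μ • x)
    (hunit : ∑ i, (x i) ^ 2 = 1)
    (u v : Fin n) (huv : G.Adj u v)
    (hdu : G.degree u = 2) (hdv : G.degree v = 2)
    (hμ2 : μ ^ 2 ≥ 14) :
    x u * x v < 1 / (4 * μ) := by
  have key : ∀ i, ∑ j ∈ G.neighborFinset i, x j = μ * x i := by
    intro i
    have := congrFun hx i
    rwa [SimpleGraph.adjMatrix_mulVec_apply, Pi.smul_apply, smul_eq_mul] at this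
  have hvmem : v ∈ G.neighborFinset u := (SimpleGraph.mem_neighborFinset G u v).mpr huv
  have humem : u ∈ G.neighborFinset v := (SimpleGraph.mem_neighborFinset G v u).mpr huv.symm
  obtain ⟨a, hav, hNu⟩ : ∃ a, a ≠ v ∧ G.neighborFinset u = {v, a} := by
    have hcard : (G.neighborFinset u).card = 2 := by
      rw [G.card_neighborFinset_eq_degree]; exact hdu
    obtain ⟨p, q, hpq, hset⟩ := Finset.card_eq_two.mp hcard
    rw [hset, Finset.mem_insert, Finset.mem_singleton] at hvmem
    rcases hvmem with h | h
    · exact ⟨q, by rw [← h] at hpq; exact hpq.symm, by rw [hset, h]⟩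
    · exact ⟨p, by rw [← h] at hpq; exact hpq, by rw [hset, h, Finset.pair_comm]⟩
  obtain ⟨b, hbu, hNv⟩ : ∃ b, b ≠ u ∧ G.neighborFinset v = {u, b} := by
    have hcard : (G.neighborFinset v).card = 2 := by
      rw [G.card_neighborFinset_eq_degree]; exact hdv
    obtain ⟨p, q, hpq, hset⟩ := Finset.card_eq_two.mp hcard
    rw [hset, Finset.mem_insert, Finset.mem_singleton] at humem
    rcases humem with h | h
    · exact ⟨q, by rw [← h] at hpq; exact hpq.symm, by rw [hset, h]⟩
    · exact ⟨p, by rw [← h] at hpq; exact hpq, by rw [hset, h, Finset.pair_comm]⟩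
  have hua : G.Adj u a := (SimpleGraph.mem_neighborFinset G u a).mp (by rw [hNu]; simp)
  have hvb : G.Adj v b := (SimpleGraph.mem_neighborFinset G v b).mp (by rw [hNv]; simp)
  have he1 : x v + x a = μ * x u := by
    have := key u; rwa [hNu, Finset.sum_pair hav.symm] at this
  have he2 : x u + x b = μ * x v := by
    have := key v; rwa [hNv, Finset.sum_pair hbu.symm] at this
  have hμpos : 0 < μ := by nlinarith [hpos u, hpos v, hpos a, he1]
  have hμ113 : μ ≥ 11/3 := by nlinarith
  have huvne : u ≠ v := huv.ne
  have hau : a ≠ u := fun h => (h ▸ hua.ne') rfl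
  have hbv : b ≠ v := fun h => (h ▸ hvb.ne') rfl
  rw [lt_div_iff₀ (by positivity)]
  by_cases hab : a = b
  · -- triangle case: a is a common neighbor of u and v
    subst hab
    have hxuv : x u = x v := by nlinarith [he1, he2, hpos u, hpos v]
    set s : Finset (Fin n) := G.neighborFinset a \ {u, v} with hs
    have hsubN : ({u, v} : Finset (Fin n)) ⊆ G.neighborFinset a := by
      intro w hw
      simp only [Finset.mem_insert, Finset.mem_singleton] at hw
      rcases hw with rfl | rfl
      · exact (SimpleGraph.mem_neighborFinset G a w).mpr hua.symm
      · exact (SimpleGraph.mem_neighborFinset G a w).mpr hvb.symm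
    have hS : (∑ j ∈ s, x j) + (x u + x v) = μ * x a := by
      have := Finset.sum_sdiff (f := x) hsubN
      rw [Finset.sum_pair huvne, key a] at this
      linarith [this]
    have hQS : x a * (∑ j ∈ s, x j) ≤ μ * (∑ j ∈ s, x j ^ 2) := by
      rw [Finset.mul_sum, Finset.mul_sum]
      apply Finset.sum_le_sum
      intro w hw
      have hwa : G.Adj a w := (SimpleGraph.mem_neighborFinset G a w).mp (Finset.mem_sdiff.mp hw).1
      have hle : x a ≤ μ * x w := by
        have hmem : a ∈ G.neighborFinset w := (SimpleGraph.mem_neighborFinset G w a).mpr hwa.symm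
        have := Finset.single_le_sum (f := x) (fun i _ => (hpos i).le) hmem
        linarith [key w]
      nlinarith [hpos w]
    have hans : a ∉ s := by simp [hs]
    have hvns : v ∉ s := by simp [hs]
    have huns : u ∉ s := by simp [hs]
    have hsq : x u ^ 2 + x v ^ 2 + x a ^ 2 + (∑ j ∈ s, x j ^ 2) ≤ 1 := by
      have h := Finset.sum_le_sum_of_subset_of_nonneg
        (Finset.subset_univ (insert u (insert v (insert a s))))
        (fun i _ _ => sq_nonneg (x i))
      rw [Finset.sum_insert (by simp [huvne, hau.symm, huns]),
          Finset.sum_insert (by simp [hav.symm, hvns]),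
          Finset.sum_insert hans, hunit] at h
      linarith
    have hxa : x a = (μ - 1) * x u := by linarith [he1, hxuv]
    have hSval : (∑ j ∈ s, x j) = (μ^2 - μ - 2) * x u := by
      rw [hxa] at hS; nlinarith [hS, hxuv]
    have hpoly : μ^3 - 4*μ^2 + μ + 1 > 0 := by nlinarith [sq_nonneg (μ - 4)]
    have hxu2 : 0 < x u ^ 2 := pow_pos (hpos u) 2
    have hQnn : (0:ℝ) ≤ ∑ j ∈ s, x j ^ 2 := Finset.sum_nonneg fun i _ => sq_nonneg (x i)
    have h1 : μ * (x u ^ 2 + x v ^ 2 + x a ^ 2 + (∑ j ∈ s, x j ^ 2)) ≤ μ := by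
      calc μ * (x u ^ 2 + x v ^ 2 + x a ^ 2 + (∑ j ∈ s, x j ^ 2))
          ≤ μ * 1 := by exact mul_le_mul_of_nonneg_left hsq hμpos.le
        _ = μ := mul_one μ
    rw [hSval, hxa] at hQS
    rw [hxa, ← hxuv] at h1
    have hmain : (2*μ^3 - 4*μ^2 + 2*μ + 2) * x u ^ 2 ≤ μ := by nlinarith [h1, hQS]
    have hfin : 4*μ^2 * x u ^ 2 < μ := by nlinarith [hpoly, hxu2, hmain]
    rw [← hxuv]
    nlinarith [hfin, hμpos, hxu2]
  · -- non-triangle case: u, v, a, b all distinct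
    have h4 : x u ^ 2 + x v ^ 2 + x a ^ 2 + x b ^ 2 ≤ 1 := by
      have h := Finset.sum_le_sum_of_subset_of_nonneg
        (Finset.subset_univ (insert u (insert v (insert a ({b} : Finset (Fin n))))))
        (fun i _ _ => sq_nonneg (x i))
      rw [Finset.sum_insert (by simp [huvne, hau.symm, hbu.symm]),
          Finset.sum_insert (by simp [hav.symm, hbv.symm]),
          Finset.sum_insert (by simp [hab]), Finset.sum_singleton, hunit] at h
      linarith
    have hTab : x a + x b = (μ - 1) * (x u + x v) := by linarith [he1, he2]
    have hsq2 : (x a + x b)^2 = (μ-1)^2 * (x u + x v)^2 := by rw [hTab]; ring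
    have h5 : ((μ-1)^2 + 1) * (x u + x v)^2 ≤ 2 := by
      nlinarith [sq_nonneg (x a - x b), sq_nonneg (x u - x v), h4, hsq2]
    have h6 : 4 * (x u * x v) ≤ (x u + x v)^2 := by nlinarith [sq_nonneg (x u - x v)]
    have hc : (0:ℝ) ≤ (μ-1)^2 + 1 := by positivity
    have h7 : ((μ-1)^2 + 1) * (4 * (x u * x v)) ≤ 2 :=
      le_trans (mul_le_mul_of_nonneg_left h6 hc) h5
    have h8 : μ^2 - 4*μ + 2 > 0 := by nlinarith [sq_nonneg (μ - 4)]
    have hP : 0 < x u * x v := mul_pos (hpos u) (hpos v)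
    nlinarith [h7, mul_pos hP h8]
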